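/- For any admissible tubing T of a graph G = (V,E) and any tube T ∈ T, there is a unique vertex v ∈ T lying outside every S ∈ T with S ⊊ T; moreover the map sending T to this vertex v is a bijection from T onto V. In particular every admissible tubing of G has exactly |V| tubes. -/

import Mathlib

open SimpleGraph

namespace Cosmo

variable {V : Type*}

/-- A tube of `G` is a connected subgraph. -/
def IsTube (G : SimpleGraph V) (T : G.Subgraph) : Prop := T.Connected

/-- Tubes are nested if one contains the other. -/
def Nested {G : SimpleGraph V} (S T : G.Subgraph) : Prop := S ≤ T ∨ T ≤ S

/-- Tubes overlap if their (vertex) intersection is nonempty and they are not nested. -/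
def Overlapping {G : SimpleGraph V} (S T : G.Subgraph) : Prop :=
  (S.verts ∩ T.verts).Nonempty ∧ ¬ Nested S T

/-- Tubes are incompatible if there is an edge of `G` between them and they are not nested. -/
def Incompatible {G : SimpleGraph V} (S T : G.Subgraph) : Prop :=
  (∃ u w, G.Adj u w ∧ u ∈ S.verts ∧ w ∈ T.verts) ∧ ¬ Nested S T

/-- Tubes are compatible if they are not incompatible. -/
def Compatible {G : SimpleGraph V} (S T : G.Subgraph) : Prop := ¬ Incompatible S T

/-- A complete tubing: a maximal collection of pairwise non-overlapping tubes. -/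
def IsCompleteTubing (G : SimpleGraph V) (𝒯 : Set G.Subgraph) : Prop :=
  Maximal (fun 𝒞 : Set G.Subgraph =>
    (∀ T ∈ 𝒞, IsTube G T) ∧ 𝒞.Pairwise fun S T => ¬ Overlapping S T) 𝒯

/-- An admissible tubing: a maximal collection of pairwise compatible induced tubes. -/
def IsAdmissibleTubing (G : SimpleGraph V) (𝒯 : Set G.Subgraph) : Prop :=
  Maximal (fun 𝒞 : Set G.Subgraph =>
    (∀ T ∈ 𝒞, IsTube G T ∧ T.IsInduced) ∧ 𝒞.Pairwise Compatible) 𝒯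

/-- A labeling of an admissible tubing by the vertices, as in the bijection lemma:
`g v` is the tube associated to `v`, i.e. `v ∈ g v` and `v` avoids all strictly
smaller tubes of the tubing. -/
def IsVertexLabeling (G : SimpleGraph V) (𝒯 : Set G.Subgraph) (g : V → G.Subgraph) : Prop :=
  Set.BijOn g Set.univ 𝒯 ∧ ∀ v, v ∈ (g v).verts ∧ ∀ S ∈ 𝒯, S < g v → v ∉ S.verts


-- helpers
variable {G : SimpleGraph V}

lemma Compatible.symm' {S T : G.Subgraph} (h : Compatible S T) : Compatible T S := by
  rintro ⟨⟨u, w, ha, hu, hw⟩, hn⟩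
  exact h ⟨⟨w, u, ha.symm, hw, hu⟩, fun hnn => hn hnn.symm⟩

/-- induced subgraph on a vertex set -/
def ind (G : SimpleGraph V) (A : Set V) : G.Subgraph where
  verts := A
  Adj u w := u ∈ A ∧ w ∈ A ∧ G.Adj u w
  adj_sub h := h.2.2
  edge_vert h := h.1
  symm := ⟨fun u w h => ⟨h.2.1, h.1, h.2.2.symm⟩⟩

lemma ind_isInduced (A : Set V) : (ind G A).IsInduced :=
  fun _ hu _ hw ha => ⟨hu, hw, ha⟩

lemma le_of_verts_subset {S T : G.Subgraph} (hT : T.IsInduced)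
    (hsub : S.verts ⊆ T.verts) : S ≤ T := by
  refine ⟨hsub, fun {u w} ha => hT (hsub (S.edge_vert ha)) (hsub (S.edge_vert (S.adj_symm ha))) (S.adj_sub ha)⟩

lemma eq_of_verts_eq {S T : G.Subgraph} (hS : S.IsInduced) (hT : T.IsInduced)
    (hv : S.verts = T.verts) : S = T :=
  le_antisymm (le_of_verts_subset hT hv.le) (le_of_verts_subset hS hv.ge)

lemma le_ind {S : G.Subgraph} {A : Set V} (hsub : S.verts ⊆ A) : S ≤ ind G A :=
  le_of_verts_subset (ind_isInduced A) hsub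

/-- component of `w` inside `A` -/
def comp (G : SimpleGraph V) (A : Set V) (w : V) : Set V :=
  {x | Relation.ReflTransGen (ind G A).Adj w x}

lemma mem_comp_self (A : Set V) (w : V) : w ∈ comp G A w := Relation.ReflTransGen.refl

lemma comp_subset {A : Set V} {w : V} (hw : w ∈ A) : comp G A w ⊆ A := by
  intro x hx
  rcases (Relation.ReflTransGen.cases_tail hx) with h | ⟨c, _, hcb⟩
  · exact h ▸ hw
  · exact hcb.2.1

lemma comp_closed {A : Set V} {w x y : V} (hx : x ∈ comp G A w) (hxA : x ∈ A)
    (hyA : y ∈ A) (ha : G.Adj x y) : y ∈ comp G A w :=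
  Relation.ReflTransGen.tail hx ⟨hxA, hyA, ha⟩

lemma comp_reach {A : Set V} {w : V} :
    ∀ {x : V}, Relation.ReflTransGen (ind G A).Adj w x →
      ∀ (hx : x ∈ comp G A w),
        (ind G (comp G A w)).coe.Reachable ⟨w, mem_comp_self A w⟩ ⟨x, hx⟩ := by
  intro x h
  induction h with
  | refl => exact fun _ => Reachable.refl _
  | @tail b c hb hbc ih =>
      intro hc
      have hbm : b ∈ comp G A w := hb
      refine (ih hbm).trans (SimpleGraph.Adj.reachable ?_)
      show (ind G (comp G A w)).Adj b c
      exact ⟨hbm, hc, hbc.2.2⟩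

lemma comp_connected {A : Set V} {w : V} (hw : w ∈ A) : (ind G (comp G A w)).Connected := by
  rw [Subgraph.connected_iff]
  refine ⟨⟨?_⟩, ⟨w, mem_comp_self A w⟩⟩
  rintro ⟨x, hx⟩ ⟨y, hy⟩
  exact (comp_reach hx hx).symm.trans (comp_reach hy hy)

/-- connected subgraph touching a component, with verts inside A, lies in the component -/
lemma walk_closed {S : G.Subgraph} {A : Set V} {v : V} (hSA : S.verts ⊆ A) :
    ∀ {a b : ↥S.verts} (_ : S.coe.Walk a b), ↑a ∈ comp G A v → ↑b ∈ comp G A v := by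
  intro a b p
  induction p with
  | nil => exact id
  | @cons x y z h _ ih =>
      intro hx
      exact ih (comp_closed hx (hSA x.2) (hSA y.2) (S.adj_sub h))

lemma verts_subset_comp {S : G.Subgraph} (hS : S.Connected) {A : Set V} {v u : V}
    (hu : u ∈ S.verts) (hucomp : u ∈ comp G A v) (hSA : S.verts ⊆ A) :
    S.verts ⊆ comp G A v := by
  intro x hx
  obtain ⟨p⟩ := hS.coe.preconnected ⟨u, hu⟩ ⟨x, hx⟩
  exact walk_closed hSA p hucomp

/-- crossing edge out of a subset of a connected subgraph -/
lemma exists_cross {T : G.Subgraph} (hT : T.Connected) {B : Set V}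
    (h1 : (T.verts ∩ B).Nonempty) (h2 : (T.verts \ B).Nonempty) :
    ∃ u w, G.Adj u w ∧ u ∈ T.verts ∩ B ∧ w ∈ T.verts \ B := by
  obtain ⟨a, haT, haB⟩ := h1
  obtain ⟨b, hbT, hbB⟩ := h2
  obtain ⟨p⟩ := hT.coe.preconnected ⟨a, haT⟩ ⟨b, hbT⟩
  obtain ⟨d, _, hdf, hds⟩ := p.exists_boundary_dart {x : ↥T.verts | ↑x ∈ B}
    (show (⟨a, haT⟩ : ↥T.verts) ∈ {x : ↥T.verts | ↑x ∈ B} from haB)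
    (show (⟨b, hbT⟩ : ↥T.verts) ∉ {x : ↥T.verts | ↑x ∈ B} from hbB)
  exact ⟨↑d.fst, ↑d.snd, T.adj_sub ((Subgraph.coe_adj _ _ _).mp d.adj),
    ⟨d.fst.2, hdf⟩, ⟨d.snd.2, hds⟩⟩

lemma exists_adj_of_mem {T : G.Subgraph} (hT : T.Connected) {u w : V}
    (hu : u ∈ T.verts) (hw : w ∈ T.verts) (hne : u ≠ w) :
    ∃ x ∈ T.verts, G.Adj u x := by
  obtain ⟨p⟩ := hT.coe.preconnected ⟨u, hu⟩ ⟨w, hw⟩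
  cases p with
  | nil => exact absurd rfl hne
  | cons h _ => exact ⟨_, (Subtype.coe_prop _), T.adj_sub h⟩

instance finiteSubgraph [Finite V] : Finite (G.Subgraph) := by
  have : Function.Injective (fun S : G.Subgraph => (S.verts, S.Adj)) := by
    intro S T hST
    exact Subgraph.ext (congrArg Prod.fst hST) (congrArg Prod.snd hST)
  exact Finite.of_injective _ this


variable {𝒯 : Set G.Subgraph}

lemma mem_of_compatible (h : IsAdmissibleTubing G 𝒯) {U : G.Subgraph}
    (hU1 : IsTube G U) (hU2 : U.IsInduced) (hU3 : ∀ S ∈ 𝒯, Compatible S U) : U ∈ 𝒯 := by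
  have hsub : 𝒯 ∪ {U} ⊆ 𝒯 := by
    apply h.2 _ Set.subset_union_left
    constructor
    · rintro T (hT | rfl)
      · exact h.1.1 T hT
      · exact ⟨hU1, hU2⟩
    · rintro S (hS | rfl) T (hT | rfl) hne
      · exact h.1.2 hS hT hne
      · exact hU3 S hS
      · exact (hU3 T hT).symm'
      · exact absurd rfl hne
  exact hsub (Set.mem_union_right _ rfl)

lemma nested_of_shared (h : IsAdmissibleTubing G 𝒯) {S T : G.Subgraph} (hS : S ∈ 𝒯)
    (hT : T ∈ 𝒯) {u : V} (hu : u ∈ S.verts) (hu' : u ∈ T.verts) : Nested S T := by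
  by_cases hST : S = T
  · exact Or.inl hST.le
  by_contra hn
  have hcomp : Compatible S T := h.1.2 hS hT hST
  by_cases hsing : ∀ x ∈ T.verts, x = u
  · apply hn; right
    apply le_of_verts_subset ((h.1.1 S hS).2)
    intro x hx; rw [hsing x hx]; exact hu
  · push_neg at hsing
    obtain ⟨w, hw, hwu⟩ := hsing
    obtain ⟨x, hxT, hax⟩ := exists_adj_of_mem (h.1.1 T hT).1 hu' hw (Ne.symm hwu)
    exact hcomp ⟨⟨u, x, hax, hu, hxT⟩, hn⟩

lemma componentSubgraph_mem (h : IsAdmissibleTubing G 𝒯) (v : V) :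
    ind G (comp G Set.univ v) ∈ 𝒯 := by
  apply mem_of_compatible h (comp_connected (Set.mem_univ v)) (ind_isInduced _)
  intro S hS
  rintro ⟨⟨u, w, ha, hu, hw⟩, hn⟩
  apply hn; left
  have hu' : u ∈ comp G Set.univ v :=
    comp_closed hw (Set.mem_univ w) (Set.mem_univ u) ha.symm
  exact le_ind (verts_subset_comp (h.1.1 S hS).1 hu hu' (Set.subset_univ _))

variable [Fintype V]

lemma exists_avoiding (h : IsAdmissibleTubing G 𝒯) {T : G.Subgraph} (hT : T ∈ 𝒯) :
    ∃ v ∈ T.verts, ∀ S ∈ 𝒯, S < T → v ∉ S.verts := by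
  by_contra hc
  push_neg at hc
  have hTc : T.Connected := (h.1.1 T hT).1
  obtain ⟨t0, ht0⟩ := hTc.nonempty
  obtain ⟨S0', hS0', hlt', ht0S⟩ := hc t0 ht0
  obtain ⟨S0, hS0, hmax⟩ := Set.Finite.exists_maximalFor id {S : G.Subgraph | S ∈ 𝒯 ∧ S < T}
    (Set.toFinite _) ⟨S0', hS0', hlt'⟩
  have hBne : (T.verts ∩ S0.verts).Nonempty := by
    obtain ⟨x, hx⟩ := (h.1.1 S0 hS0.1).1.nonempty
    exact ⟨x, hS0.2.le.1 hx, hx⟩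
  have hDne : (T.verts \ S0.verts).Nonempty := by
    rw [Set.diff_nonempty]
    intro hD
    exact absurd (eq_of_verts_eq ((h.1.1 S0 hS0.1).2) ((h.1.1 T hT).2)
      (le_antisymm hS0.2.le.1 hD)) hS0.2.ne
  obtain ⟨u, w, ha, ⟨huT, huS⟩, hwT, hwS⟩ := exists_cross hTc hBne hDne
  obtain ⟨S1, hS1, hlt1, hwS1⟩ := hc w hwT
  have hne : S0 ≠ S1 := fun e => hwS (e ▸ hwS1)
  apply h.1.2 hS0.1 hS1 hne
  refine ⟨⟨u, w, ha, huS, hwS1⟩, ?_⟩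
  rintro (hle | hle)
  · exact hne (le_antisymm hle (hmax ⟨hS1, hlt1⟩ hle))
  · exact hwS (hle.1 hwS1)

lemma unique_avoiding (h : IsAdmissibleTubing G 𝒯) {T : G.Subgraph} (hT : T ∈ 𝒯) {v w : V}
    (hv : v ∈ T.verts ∧ ∀ S ∈ 𝒯, S < T → v ∉ S.verts)
    (hw : w ∈ T.verts ∧ ∀ S ∈ 𝒯, S < T → w ∉ S.verts) : v = w := by
  by_contra hne
  set A := T.verts \ {v} with hA
  have hwA : w ∈ A := ⟨hw.1, fun e => hne (Eq.symm e)⟩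
  set B := comp G A w with hB
  have hBsub : B ⊆ A := comp_subset hwA
  have hTind : T.IsInduced := (h.1.1 T hT).2
  have hBT : B ⊆ T.verts := fun x hx => (hBsub hx).1
  have hT'mem : ind G B ∈ 𝒯 := by
    apply mem_of_compatible h (comp_connected hwA) (ind_isInduced _)
    intro S hS
    by_cases hST : S = T
    · subst hST
      exact fun hinc => hinc.2 (Or.inr (le_of_verts_subset hTind hBT))
    by_cases hn : Nested S T
    · rcases hn with hle | hle
      · have hlt : S < T := lt_of_le_of_ne hle hST
        have hvS : v ∉ S.verts := hv.2 S hS hlt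
        have hSA : S.verts ⊆ A := fun x hx => ⟨hle.1 hx, fun e => hvS (e ▸ hx)⟩
        rintro ⟨⟨a, b, hab, haS, hbB⟩, hnn⟩
        apply hnn; left
        have haB : a ∈ B := comp_closed hbB (hBsub hbB) (hSA haS) hab.symm
        exact le_ind (verts_subset_comp (h.1.1 S hS).1 haS haB hSA)
      · rintro ⟨_, hnn⟩
        exact hnn (Or.inr (le_trans (le_of_verts_subset hTind hBT) hle))
    · rintro ⟨⟨a, b, hab, haS, hbB⟩, _⟩
      exact h.1.2 hS hT hST ⟨⟨a, b, hab, haS, hBT hbB⟩, hn⟩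
  have hlt : ind G B < T := by
    apply lt_of_le_of_ne (le_of_verts_subset hTind hBT)
    intro e
    have hvB : v ∈ B := by rw [show B = T.verts from congrArg Subgraph.verts e]; exact hv.1
    exact (hBsub hvB).2 rfl
  exact hw.2 _ hT'mem hlt (mem_comp_self A w)

lemma exists_min (h : IsAdmissibleTubing G 𝒯) (v : V) :
    ∃ Tv, (Tv ∈ 𝒯 ∧ v ∈ Tv.verts) ∧ ∀ S ∈ 𝒯, S < Tv → v ∉ S.verts := by
  have hne : {S : G.Subgraph | S ∈ 𝒯 ∧ v ∈ S.verts}.Nonempty :=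
    ⟨ind G (comp G Set.univ v), componentSubgraph_mem h v, mem_comp_self _ v⟩
  obtain ⟨Tv, hTv, hmin⟩ := Set.Finite.exists_minimalFor id
    {S : G.Subgraph | S ∈ 𝒯 ∧ v ∈ S.verts} (Set.toFinite _) hne
  refine ⟨Tv, hTv, ?_⟩
  intro S hS hlt hvS
  exact lt_irrefl _ (lt_of_lt_of_le hlt (hmin ⟨hS, hvS⟩ hlt.le))


/-- in an admissible tubing, each tube has a unique vertex outside all strictly
smaller tubes of the tubing; this gives a bijection between the tubes and the vertices, so
the tubing has exactly `|V|` tubes. -/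
theorem admissibleTubing_vertex_bijection {V : Type*} [Fintype V] (G : SimpleGraph V)
    (𝒯 : Set G.Subgraph) (h : IsAdmissibleTubing G 𝒯) :
    (∀ T ∈ 𝒯, ∃! v : V, v ∈ T.verts ∧ ∀ S ∈ 𝒯, S < T → v ∉ S.verts) ∧
    (∃ g : V → G.Subgraph, IsVertexLabeling G 𝒯 g) ∧
    𝒯.ncard = Fintype.card V := by
  have huniq : ∀ T ∈ 𝒯, ∃! v : V, v ∈ T.verts ∧ ∀ S ∈ 𝒯, S < T → v ∉ S.verts := by
    intro T hT
    obtain ⟨v, hv1, hv2⟩ := exists_avoiding h hT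
    exact ⟨v, ⟨hv1, hv2⟩, fun w hw => unique_avoiding h hT hw ⟨hv1, hv2⟩⟩
  choose g hg using exists_min h
  have hg1 : ∀ v, g v ∈ 𝒯 := fun v => (hg v).1.1
  have hg2 : ∀ v, v ∈ (g v).verts := fun v => (hg v).1.2
  have hg3 : ∀ v, ∀ S ∈ 𝒯, S < g v → v ∉ S.verts := fun v => (hg v).2
  have hbij : Set.BijOn g Set.univ 𝒯 := by
    refine ⟨fun v _ => hg1 v, ?_, ?_⟩
    · intro v _ w _ hvw
      obtain ⟨u, _, huu⟩ := huniq (g v) (hg1 v)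
      have hw' : w ∈ (g v).verts ∧ ∀ S ∈ 𝒯, S < g v → w ∉ S.verts := by
        rw [hvw]; exact ⟨hg2 w, hg3 w⟩
      exact (huu v ⟨hg2 v, hg3 v⟩).trans (huu w hw').symm
    · intro T hT
      obtain ⟨v, hv, _⟩ := huniq T hT
      refine ⟨v, Set.mem_univ v, ?_⟩
      by_contra hne
      rcases nested_of_shared h (hg1 v) hT (hg2 v) hv.1 with hle | hle
      · exact hv.2 (g v) (hg1 v) (lt_of_le_of_ne hle hne) (hg2 v)
      · exact hg3 v T hT (lt_of_le_of_ne hle (Ne.symm hne)) hv.1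
  refine ⟨huniq, ⟨g, hbij, fun v => ⟨hg2 v, hg3 v⟩⟩, ?_⟩
  rw [← hbij.image_eq, Set.ncard_image_of_injOn hbij.injOn, Set.ncard_univ,
    Nat.card_eq_fintype_card]


end Cosmo
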